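/- Let M > 0 and ε ∈ (0,1). Set r_ε := −(1+M)(1−ε), define for r > r_ε the functions Ψ_ε(r) := −1−M + (((1+r+M)³ − ε³·(1+M)³)/(1−ε³))^{1/3} and Ψ_ε'(r) := (1+r+M)² / ((1−ε³)^{1/3}·((1+r+M)³ − ε³·(1+M)³)^{2/3}), and set ρ_ε := (ε³·(1+M)³ + (1−ε³)·M³)^{1/3} − (1+M). Then for every r ∈ [ρ_ε, 0] and every w ∈ [0, M]: (1−ε³)·Ψ_ε'(r)·(1 + Ψ_ε(r) + w)² ≤ (1 + r + w)². -/

import Mathlib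

set_option maxHeartbeats 1000000

/-- Key subsolution estimate: for `r ∈ [ρ_ε, 0]` and `w ∈ [0, M]`,
`(1−ε³)·Ψ_ε′(r)·(1 + Ψ_ε(r) + w)² ≤ (1 + r + w)²`, where
`Ψ_ε(r) = −1−M + (((1+r+M)³ − ε³(1+M)³)/(1−ε³))^{1/3}`,
`Ψ_ε′(r) = (1+r+M)² / ((1−ε³)^{1/3}·((1+r+M)³ − ε³(1+M)³)^{2/3})`, and
`ρ_ε = (ε³(1+M)³ + (1−ε³)M³)^{1/3} − (1+M)`. -/
theorem stmt_19 (M ε : ℝ) (hM : 0 < M) (hε : ε ∈ Set.Ioo (0 : ℝ) 1) :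
    ∀ r ∈ Set.Icc ((ε ^ 3 * (1 + M) ^ 3 + (1 - ε ^ 3) * M ^ 3) ^ ((1 : ℝ) / 3) - (1 + M))
      (0 : ℝ), ∀ w ∈ Set.Icc (0 : ℝ) M,
      (1 - ε ^ 3) *
          ((1 + r + M) ^ 2 /
            ((1 - ε ^ 3) ^ ((1 : ℝ) / 3) *
              ((1 + r + M) ^ 3 - ε ^ 3 * (1 + M) ^ 3) ^ ((2 : ℝ) / 3))) *
          (1 + (-1 - M +
            (((1 + r + M) ^ 3 - ε ^ 3 * (1 + M) ^ 3) / (1 - ε ^ 3)) ^ ((1 : ℝ) / 3)) + w) ^ 2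
        ≤ (1 + r + w) ^ 2 := by
  obtain ⟨hε0, hε1⟩ := hε
  intro r hr w hw
  obtain ⟨hr1, hr2⟩ := hr
  obtain ⟨hw1, hw2⟩ := hw
  have hD : 0 < 1 - ε ^ 3 := by nlinarith [pow_lt_one₀ hε0.le hε1 (three_ne_zero)]
  have h13 : ((1:ℝ)/3) = ((3:ℕ):ℝ)⁻¹ := by norm_num
  set A := 1 + r + M with hA
  set C := A ^ 3 - ε ^ 3 * (1 + M) ^ 3 with hCdef
  set D := 1 - ε ^ 3 with hDdef
  -- A ≥ (εᵏ... )^{1/3}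
  have hEK : (0:ℝ) ≤ ε ^ 3 * (1 + M) ^ 3 + D * M ^ 3 := by positivity
  have hrA : (ε ^ 3 * (1 + M) ^ 3 + D * M ^ 3) ^ ((1 : ℝ) / 3) ≤ A := by
    rw [hA]; linarith
  have hA3 : ε ^ 3 * (1 + M) ^ 3 + D * M ^ 3 ≤ A ^ 3 := by
    have h0 : (0:ℝ) ≤ (ε ^ 3 * (1 + M) ^ 3 + D * M ^ 3) ^ ((1 : ℝ) / 3) :=
      Real.rpow_nonneg hEK _
    calc ε ^ 3 * (1 + M) ^ 3 + D * M ^ 3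
        = ((ε ^ 3 * (1 + M) ^ 3 + D * M ^ 3) ^ ((1 : ℝ) / 3)) ^ 3 := by
          rw [h13, Real.rpow_inv_natCast_pow hEK three_ne_zero]
      _ ≤ A ^ 3 := pow_le_pow_left₀ h0 hrA 3
  have hAM : M ≤ A := by
    have hMK : M ^ 3 ≤ ε ^ 3 * (1 + M) ^ 3 + D * M ^ 3 := by
      have : M ^ 3 ≤ (1 + M) ^ 3 := pow_le_pow_left₀ hM.le (by linarith) 3
      nlinarith [pow_pos hε0 3]
    have := Real.rpow_le_rpow (by positivity) hMK (by norm_num : (0:ℝ) ≤ 1/3)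
    rw [h13] at this
    rw [Real.pow_rpow_inv_natCast hM.le three_ne_zero] at this
    rw [← h13] at this
    linarith
  have hA0 : 0 < A := lt_of_lt_of_le hM hAM
  have hCM : D * M ^ 3 ≤ C := by rw [hCdef]; linarith
  have hC0 : 0 < C := lt_of_lt_of_le (by positivity) hCM
  have hCA : C ≤ D * A ^ 3 := by
    have hA1M : A ≤ 1 + M := by rw [hA]; linarith
    have : A ^ 3 ≤ (1 + M) ^ 3 := pow_le_pow_left₀ hA0.le hA1M 3
    rw [hCdef, hDdef]; nlinarith [pow_pos hε0 3]
  set b := (C / D) ^ ((1:ℝ)/3) with hbdef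
  have hB0 : 0 < C / D := div_pos hC0 hD
  have hb0 : 0 < b := Real.rpow_pos_of_pos hB0 _
  have hbM : M ≤ b := by
    have hMB : M ^ 3 ≤ C / D := (le_div_iff₀ hD).mpr (by linarith [hCM])
    have := Real.rpow_le_rpow (by positivity) hMB (by norm_num : (0:ℝ) ≤ 1/3)
    rw [h13, Real.pow_rpow_inv_natCast hM.le three_ne_zero] at this
    rw [← h13] at this; exact this
  have hbA : b ≤ A := by
    have hBA : C / D ≤ A ^ 3 := (div_le_iff₀ hD).mpr (by linarith [hCA])
    have := Real.rpow_le_rpow hB0.le hBA (by norm_num : (0:ℝ) ≤ 1/3)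
    rw [h13, Real.pow_rpow_inv_natCast hA0.le three_ne_zero] at this
    rw [← h13] at this; exact this
  have hb2 : b ^ 2 = C ^ ((2:ℝ)/3) / D ^ ((2:ℝ)/3) := by
    rw [hbdef, ← Real.rpow_natCast ((C/D) ^ ((1:ℝ)/3)) 2, ← Real.rpow_mul hB0.le,
      Real.div_rpow hC0.le hD.le]
    norm_num
  have hDsplit : D = D ^ ((1:ℝ)/3) * D ^ ((2:ℝ)/3) := by
    rw [← Real.rpow_add hD]
    norm_num
  have hD13 : 0 < D ^ ((1:ℝ)/3) := Real.rpow_pos_of_pos hD _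
  have hD23 : 0 < D ^ ((2:ℝ)/3) := Real.rpow_pos_of_pos hD _
  have hC23 : 0 < C ^ ((2:ℝ)/3) := Real.rpow_pos_of_pos hC0 _
  have hLHS : D * (A ^ 2 / (D ^ ((1:ℝ)/3) * C ^ ((2:ℝ)/3))) = A ^ 2 / b ^ 2 := by
    rw [hb2]
    rw [div_div_eq_mul_div]
    rw [eq_div_iff (by positivity)]
    rw [mul_div_assoc', div_mul_eq_mul_div, div_eq_iff (mul_pos hD13 hC23).ne']
    linear_combination (A ^ 2 * C ^ ((2:ℝ)/3)) * hDsplit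
  rw [hLHS, div_mul_eq_mul_div, div_le_iff₀ (by positivity),
    show (1 : ℝ) + r + w = A + w - M by rw [hA]; ring,
    show (1 : ℝ) + (-1 - M + b) + w = b + w - M by ring]
  have hq : 0 ≤ A + w - M := by linarith
  have hp : 0 ≤ b + w - M := by linarith
  nlinarith [mul_nonneg (mul_nonneg (sub_nonneg.mpr hbA) (sub_nonneg.mpr hw2))
    (add_nonneg (mul_nonneg hb0.le hq) (mul_nonneg hA0.le hp))]
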